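/- arXiv:2605.08417 — 4 statements merged into one kernel-verified Lean document; each statement's English description precedes it below -/
import Mathlib

section
/- Let S, A be finite sets, P0(·|z) a probability distribution on S for each z ∈ S×A, r : S×A → ℝ, γ ∈ (0,1), δ ≥ 0, ε ≥ 0, and suppose L := γ(1 + √(2δ)) < 1. Define for U : S×A → ℝ the operator R_ε[U](z) := r(z) + γ E_{P0(·|z)}[v[U](X)] − γ√(2δ)·√(Var_{P0(·|z)}(v[U](X)) + ε), where v[U](s) = max_a U(s,a). Then R_ε is an L-contraction in the supremum norm: ‖R_ε[U1] − R_ε[U2]‖∞ ≤ L‖U1 − U2‖∞ for all U1, U2. -/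
noncomputable def supNorm {Z : Type*} [Fintype Z] [Nonempty Z] (f : Z → ℝ) : ℝ :=
  ⨆ z, |f z|

noncomputable def vmax {S A : Type*} [Fintype A] [Nonempty A] (U : S × A → ℝ) (s : S) : ℝ :=
  ⨆ a, U (s, a)

def expect {Ω : Type*} [Fintype Ω] (p : Ω → ℝ) (f : Ω → ℝ) : ℝ :=
  ∑ ω, p ω * f ω

noncomputable def variance {Ω : Type*} [Fintype Ω] (p : Ω → ℝ) (f : Ω → ℝ) : ℝ :=
  expect p (fun ω => f ω ^ 2) - (expect p f) ^ 2

lemma sqrt_add_sub (a b ε : ℝ) (hb : 0 ≤ b) (hba : b ≤ a) (hε : 0 ≤ ε) :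
    Real.sqrt (a + ε) - Real.sqrt (b + ε) ≤ Real.sqrt a - Real.sqrt b := by
  have ha : 0 ≤ a := hb.trans hba
  have key : Real.sqrt (a+ε) + Real.sqrt b ≤ Real.sqrt (b+ε) + Real.sqrt a := by
    have h1 : Real.sqrt ((a+ε)*b) ≤ Real.sqrt ((b+ε)*a) := Real.sqrt_le_sqrt (by nlinarith)
    have e1 : (Real.sqrt (a+ε) + Real.sqrt b)^2 = (a+ε) + b + 2 * Real.sqrt ((a+ε)*b) := by
      rw [add_sq, Real.sq_sqrt (by linarith), Real.sq_sqrt hb, Real.sqrt_mul (by linarith)]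
      ring
    have e2 : (Real.sqrt (b+ε) + Real.sqrt a)^2 = (b+ε) + a + 2 * Real.sqrt ((b+ε)*a) := by
      rw [add_sq, Real.sq_sqrt (by linarith), Real.sq_sqrt ha, Real.sqrt_mul (by linarith)]
      ring
    have hsq : (Real.sqrt (a+ε) + Real.sqrt b)^2 ≤ (Real.sqrt (b+ε) + Real.sqrt a)^2 := by
      rw [e1, e2]; linarith
    have := Real.sqrt_le_sqrt hsq
    rwa [Real.sqrt_sq (by positivity), Real.sqrt_sq (by positivity)] at this
  linarith

lemma variance_eq {Ω : Type*} [Fintype Ω] (p f : Ω → ℝ) (hsum : ∑ ω, p ω = 1) :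
    variance p f = ∑ ω, p ω * (f ω - expect p f)^2 := by
  have : (∑ ω, p ω * (f ω - expect p f)^2)
      = (∑ ω, (p ω * f ω^2 - 2 * expect p f * (p ω * f ω) + (expect p f)^2 * p ω)) :=
    Finset.sum_congr rfl (fun ω _ => by ring)
  rw [this, Finset.sum_add_distrib, Finset.sum_sub_distrib, ← Finset.mul_sum, ← Finset.mul_sum,
    hsum, variance]
  simp only [expect]
  ring

lemma expect_sub {Ω : Type*} [Fintype Ω] (p f g : Ω → ℝ) :
    expect p (fun ω => f ω - g ω) = expect p f - expect p g := by
  simp [expect, mul_sub, Finset.sum_sub_distrib]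

lemma sqrt_variance_eq_norm {Ω : Type*} [Fintype Ω] (p f : Ω → ℝ)
    (hp : ∀ ω, 0 ≤ p ω) (hsum : ∑ ω, p ω = 1) :
    Real.sqrt (variance p f)
      = ‖(WithLp.equiv 2 (Ω → ℝ)).symm (fun ω => Real.sqrt (p ω) * (f ω - expect p f))‖ := by
  rw [EuclideanSpace.norm_eq, variance_eq p f hsum]
  congr 1
  apply Finset.sum_congr rfl
  intro ω _
  rw [WithLp.equiv_symm_apply, WithLp.ofLp_toLp, Real.norm_eq_abs, sq_abs, mul_pow, Real.sq_sqrt (hp ω)]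

lemma variance_nonneg {Ω : Type*} [Fintype Ω] (p f : Ω → ℝ)
    (hp : ∀ ω, 0 ≤ p ω) (hsum : ∑ ω, p ω = 1) : 0 ≤ variance p f := by
  rw [variance_eq p f hsum]
  exact Finset.sum_nonneg fun ω _ => mul_nonneg (hp ω) (sq_nonneg _)

lemma sqrt_variance_sub_le {Ω : Type*} [Fintype Ω] (p f g : Ω → ℝ)
    (hp : ∀ ω, 0 ≤ p ω) (hsum : ∑ ω, p ω = 1) :
    Real.sqrt (variance p f) - Real.sqrt (variance p g)
      ≤ Real.sqrt (variance p (fun ω => f ω - g ω)) := by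
  rw [sqrt_variance_eq_norm p f hp hsum, sqrt_variance_eq_norm p g hp hsum,
    sqrt_variance_eq_norm p _ hp hsum]
  have hdiff : (WithLp.equiv 2 (Ω → ℝ)).symm (fun ω => Real.sqrt (p ω) * ((fun ω => f ω - g ω) ω
        - expect p (fun ω => f ω - g ω)))
      = (WithLp.equiv 2 (Ω → ℝ)).symm (fun ω => Real.sqrt (p ω) * (f ω - expect p f))
        - (WithLp.equiv 2 (Ω → ℝ)).symm (fun ω => Real.sqrt (p ω) * (g ω - expect p g)) := by
    ext ω
    simp only [WithLp.equiv_symm_apply, WithLp.ofLp_toLp, WithLp.ofLp_sub, Pi.sub_apply, expect_sub]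
    ring
  rw [hdiff]
  exact norm_sub_norm_le _ _

lemma sqrt_variance_le {Ω : Type*} [Fintype Ω] (p f : Ω → ℝ)
    (hp : ∀ ω, 0 ≤ p ω) (hsum : ∑ ω, p ω = 1) (M : ℝ) (hM : 0 ≤ M)
    (hf : ∀ ω, |f ω| ≤ M) : Real.sqrt (variance p f) ≤ M := by
  have h1 : variance p f ≤ M^2 := by
    have h2 : expect p (fun ω => f ω ^ 2) ≤ M^2 := by
      calc expect p (fun ω => f ω ^ 2) ≤ ∑ ω, p ω * M^2 := by
            apply Finset.sum_le_sum
            intro ω _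
            apply mul_le_mul_of_nonneg_left _ (hp ω)
            show f ω ^ 2 ≤ M ^ 2
            nlinarith [sq_abs (f ω), hf ω, abs_nonneg (f ω)]
        _ = M^2 := by rw [← Finset.sum_mul, hsum, one_mul]
    have := sq_nonneg (expect p f)
    simp only [variance]
    linarith
  calc Real.sqrt (variance p f) ≤ Real.sqrt (M^2) := Real.sqrt_le_sqrt h1
    _ = M := Real.sqrt_sq hM

lemma abs_le_supNorm {Z : Type*} [Fintype Z] [Nonempty Z] (f : Z → ℝ) (z : Z) :
    |f z| ≤ supNorm f :=
  le_ciSup (f := fun z => |f z|) (Set.Finite.bddAbove (Set.finite_range _)) z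

lemma supNorm_nonneg {Z : Type*} [Fintype Z] [Nonempty Z] (f : Z → ℝ) : 0 ≤ supNorm f :=
  le_trans (abs_nonneg _) (abs_le_supNorm f (Classical.arbitrary Z))

lemma vmax_sub_le {S A : Type*} [Fintype S] [Nonempty S] [Fintype A] [Nonempty A]
    (U1 U2 : S × A → ℝ) (s : S) :
    |vmax U1 s - vmax U2 s| ≤ supNorm (fun z => U1 z - U2 z) := by
  set M := supNorm (fun z => U1 z - U2 z) with hMdef
  have key : ∀ (V W : S × A → ℝ), (∀ z, V z - W z ≤ M) → vmax V s - vmax W s ≤ M := by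
    intro V W h
    rw [sub_le_iff_le_add, vmax]
    apply ciSup_le
    intro a
    calc V (s, a) ≤ W (s, a) + M := by linarith [h (s, a)]
      _ ≤ vmax W s + M :=
          add_le_add_left
            (le_ciSup (f := fun a => W (s, a)) (Set.Finite.bddAbove (Set.finite_range _)) a) M
      _ = M + vmax W s := add_comm _ _
  have h1 : vmax U1 s - vmax U2 s ≤ M := key U1 U2 fun z =>
    le_trans (le_abs_self _) (abs_le_supNorm (fun z => U1 z - U2 z) z)
  have h2 : vmax U2 s - vmax U1 s ≤ M := key U2 U1 fun z => by
    have := abs_le_supNorm (fun z => U1 z - U2 z) z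
    rw [abs_sub_comm] at this
    exact le_trans (le_abs_self _) this
  exact abs_le.2 ⟨by linarith, h1⟩

lemma abs_expect_le {Ω : Type*} [Fintype Ω] (p f : Ω → ℝ)
    (hp : ∀ ω, 0 ≤ p ω) (hsum : ∑ ω, p ω = 1) (M : ℝ) (hf : ∀ ω, |f ω| ≤ M) :
    |expect p f| ≤ M := by
  calc |expect p f| ≤ ∑ ω, |p ω * f ω| := Finset.abs_sum_le_sum_abs _ _
    _ ≤ ∑ ω, p ω * M := by
        apply Finset.sum_le_sum
        intro ω _
        rw [abs_mul, abs_of_nonneg (hp ω)]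
        exact mul_le_mul_of_nonneg_left (hf ω) (hp ω)
    _ = M := by rw [← Finset.sum_mul, hsum, one_mul]

/-- The stabilized approximate robust Bellman operator `R_ε`. -/
noncomputable def Rop {S A : Type*} [Fintype S] [Fintype A] [Nonempty A]
    (P0 : S × A → S → ℝ) (r : S × A → ℝ) (γ δ ε : ℝ) (U : S × A → ℝ) (z : S × A) : ℝ :=
  r z + γ * expect (P0 z) (vmax U)
    - γ * Real.sqrt (2 * δ) * Real.sqrt (variance (P0 z) (vmax U) + ε)

theorem stmt4 {S A : Type*} [Fintype S] [Nonempty S] [Fintype A] [Nonempty A]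
    (P0 : S × A → S → ℝ) (hP0 : ∀ z, (∀ s, 0 ≤ P0 z s) ∧ ∑ s, P0 z s = 1)
    (r : S × A → ℝ) (γ δ ε : ℝ) (hγ : γ ∈ Set.Ioo (0 : ℝ) 1) (hδ : 0 ≤ δ) (hε : 0 ≤ ε)
    (hL : γ * (1 + Real.sqrt (2 * δ)) < 1) (U1 U2 : S × A → ℝ) :
    supNorm (fun z => Rop P0 r γ δ ε U1 z - Rop P0 r γ δ ε U2 z)
      ≤ γ * (1 + Real.sqrt (2 * δ)) * supNorm (fun z => U1 z - U2 z) := by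
  set M := supNorm (fun z => U1 z - U2 z) with hMdef
  have hM0 : 0 ≤ M := supNorm_nonneg _
  have hγ0 : 0 ≤ γ := le_of_lt hγ.1
  have hsqδ : 0 ≤ Real.sqrt (2 * δ) := Real.sqrt_nonneg _
  apply ciSup_le
  intro z
  show |Rop P0 r γ δ ε U1 z - Rop P0 r γ δ ε U2 z| ≤ γ * (1 + Real.sqrt (2 * δ)) * M
  obtain ⟨hp, hsum⟩ := hP0 z
  set p := P0 z
  have hv : ∀ s, |vmax U1 s - vmax U2 s| ≤ M := fun s => vmax_sub_le U1 U2 s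
  have hE : |expect p (vmax U1) - expect p (vmax U2)| ≤ M := by
    rw [← expect_sub]
    exact abs_expect_le p _ hp hsum M hv
  -- variance bounds
  have hV1 : 0 ≤ variance p (vmax U1) := variance_nonneg p _ hp hsum
  have hV2 : 0 ≤ variance p (vmax U2) := variance_nonneg p _ hp hsum
  have hS12 : Real.sqrt (variance p (vmax U1)) - Real.sqrt (variance p (vmax U2)) ≤ M :=
    le_trans (sqrt_variance_sub_le p _ _ hp hsum)
      (sqrt_variance_le p _ hp hsum M hM0 hv)
  have hS21 : Real.sqrt (variance p (vmax U2)) - Real.sqrt (variance p (vmax U1)) ≤ M :=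
    le_trans (sqrt_variance_sub_le p _ _ hp hsum)
      (sqrt_variance_le p _ hp hsum M hM0 (fun s => by rw [abs_sub_comm]; exact hv s))
  have hSe : |Real.sqrt (variance p (vmax U1) + ε) - Real.sqrt (variance p (vmax U2) + ε)| ≤ M := by
    rcases le_total (variance p (vmax U2)) (variance p (vmax U1)) with h | h
    · have := sqrt_add_sub _ _ ε hV2 h hε
      have h2 : Real.sqrt (variance p (vmax U2) + ε) ≤ Real.sqrt (variance p (vmax U1) + ε) :=
        Real.sqrt_le_sqrt (by linarith)
      rw [abs_of_nonneg (by linarith)]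
      linarith
    · have := sqrt_add_sub _ _ ε hV1 h hε
      have h2 : Real.sqrt (variance p (vmax U1) + ε) ≤ Real.sqrt (variance p (vmax U2) + ε) :=
        Real.sqrt_le_sqrt (by linarith)
      rw [abs_of_nonpos (by linarith), neg_sub]
      linarith
  have hrw : Rop P0 r γ δ ε U1 z - Rop P0 r γ δ ε U2 z
      = γ * (expect p (vmax U1) - expect p (vmax U2))
        - γ * Real.sqrt (2 * δ)
          * (Real.sqrt (variance p (vmax U1) + ε) - Real.sqrt (variance p (vmax U2) + ε)) := by
    simp only [Rop]
    ring
  rw [hrw]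
  calc |γ * (expect p (vmax U1) - expect p (vmax U2))
        - γ * Real.sqrt (2 * δ)
          * (Real.sqrt (variance p (vmax U1) + ε) - Real.sqrt (variance p (vmax U2) + ε))|
      ≤ |γ * (expect p (vmax U1) - expect p (vmax U2))|
        + |γ * Real.sqrt (2 * δ)
          * (Real.sqrt (variance p (vmax U1) + ε) - Real.sqrt (variance p (vmax U2) + ε))| :=
        abs_sub _ _
    _ ≤ γ * M + γ * Real.sqrt (2 * δ) * M := by
        rw [abs_mul, abs_mul, abs_of_nonneg hγ0, abs_of_nonneg (by positivity : (0:ℝ) ≤ γ * Real.sqrt (2*δ))]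
        exact add_le_add (mul_le_mul_of_nonneg_left hE hγ0)
          (mul_le_mul_of_nonneg_left hSe (by positivity))
    _ = γ * (1 + Real.sqrt (2 * δ)) * M := by ring
end

section
/- Let W be a bounded random variable on a finite probability space with E[W] = 0, |W| ≤ M for some M > 0, and Var(W) = σ². For η ∈ (0, 1/M), the function L(η) := 1 − ηW is a nonnegative likelihood ratio with E[L(η)] = 1, and the tilted measure Q_η defined by E_{Q_η}[φ] := E[φ·L(η)] satisfies D_KL(Q_η ‖ P) ≤ η²σ²/(2(1 − ηM)), where P is the base measure. -/
/-- KL divergence between two distributions on a finite space. -/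
noncomputable def klDiv {Ω : Type*} [Fintype Ω] (q p : Ω → ℝ) : ℝ :=
  ∑ ω, q ω * Real.log (q ω / p ω)

lemma g_bound (c : ℝ) (hc0 : 0 < c) (hc1 : c < 1) (w : ℝ) (hw : |w| ≤ c) :
    (1 - w) * Real.log (1 - w) + w ≤ w ^ 2 / (2 * (1 - c)) := by
  obtain ⟨hwl, hwr⟩ := abs_le.mp hw
  set f : ℝ → ℝ := fun x => x ^ 2 / (2 * (1 - c)) - (1 - x) * Real.log (1 - x) - x with hf
  have hcne : (1:ℝ) - c ≠ 0 := by linarith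
  have hderiv : ∀ x ∈ Set.Icc (-c) c, HasDerivAt f (x / (1 - c) + Real.log (1 - x)) x := by
    intro x hx
    have hx1 : (1 : ℝ) - x ≠ 0 := by
      have := hx.2; nlinarith
    have h1 : HasDerivAt (fun y : ℝ => 1 - y) (-1) x := (hasDerivAt_id x).const_sub 1
    have h2 : HasDerivAt (fun y : ℝ => Real.log (1 - y)) (-1 / (1 - x)) x := h1.log hx1
    have h3 : HasDerivAt (fun y : ℝ => (1 - y) * Real.log (1 - y))
        ((-1) * Real.log (1 - x) + (1 - x) * (-1 / (1 - x))) x := h1.mul h2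
    have h4 : HasDerivAt (fun y : ℝ => y ^ 2 / (2 * (1 - c)))
        ((2 * x ^ 1) / (2 * (1 - c))) x := (hasDerivAt_pow 2 x).div_const _
    have h5 := (h4.sub h3).sub (hasDerivAt_id x)
    have h6 : HasDerivAt f _ x := h5
    convert h6 using 1
    rw [mul_div_assoc', mul_div_cancel_left₀ _ hx1, pow_one, mul_div_mul_left _ _ two_ne_zero]
    ring
  have hcont : ContinuousOn f (Set.Icc (-c) c) :=
    fun x hx => ((hderiv x hx).differentiableAt).continuousAt.continuousWithinAt
  have hc1' : (0:ℝ) < 1 - c := by linarith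
  have hmono : MonotoneOn f (Set.Icc 0 c) := by
    apply monotoneOn_of_deriv_nonneg (convex_Icc 0 c)
      (hcont.mono (Set.Icc_subset_Icc (by linarith) le_rfl))
    · intro x hx
      rw [interior_Icc] at hx
      exact ((hderiv x ⟨by linarith [hx.1], le_of_lt hx.2⟩).differentiableAt).differentiableWithinAt
    · intro x hx
      rw [interior_Icc] at hx
      rw [(hderiv x ⟨by linarith [hx.1], le_of_lt hx.2⟩).deriv]
      have hx1 : (0:ℝ) < 1 - x := by linarith [hx.2]
      have hlog : Real.log (1 - x)⁻¹ ≤ (1 - x)⁻¹ - 1 :=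
        Real.log_le_sub_one_of_pos (by positivity)
      rw [Real.log_inv] at hlog
      have h1 : (1 - x)⁻¹ - 1 = x / (1 - x) := by field_simp; ring
      have h2 : x / (1 - x) ≤ x / (1 - c) := by
        apply div_le_div_of_nonneg_left (le_of_lt hx.1) hc1'
        linarith [hx.2]
      linarith
  have hanti : AntitoneOn f (Set.Icc (-c) 0) := by
    apply antitoneOn_of_deriv_nonpos (convex_Icc (-c) 0)
      (hcont.mono (Set.Icc_subset_Icc le_rfl (by linarith)))
    · intro x hx
      rw [interior_Icc] at hx
      exact ((hderiv x ⟨le_of_lt hx.1, by linarith [hx.2]⟩).differentiableAt).differentiableWithinAt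
    · intro x hx
      rw [interior_Icc] at hx
      rw [(hderiv x ⟨le_of_lt hx.1, by linarith [hx.2]⟩).deriv]
      have hx1 : (0:ℝ) < 1 - x := by linarith [hx.2]
      have hlog : Real.log (1 - x) ≤ (1 - x) - 1 := Real.log_le_sub_one_of_pos hx1
      have h1 : x / (1 - c) ≤ x := by
        rw [div_le_iff₀ hc1']
        nlinarith [hx.2]
      linarith
  have hf0 : f 0 = 0 := by simp [hf]
  have key : 0 ≤ f w := by
    rcases le_or_gt 0 w with h | h
    · have := hmono ⟨le_rfl, le_of_lt hc0⟩ ⟨h, hwr⟩ h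
      linarith [hf0 ▸ this]
    · have := hanti ⟨hwl, le_of_lt h⟩ ⟨neg_nonpos_of_nonneg (le_of_lt hc0), le_rfl⟩ (le_of_lt h)
      linarith [hf0 ▸ this]
  have : f w = w ^ 2 / (2 * (1 - c)) - (1 - w) * Real.log (1 - w) - w := rfl
  linarith [key, this ▸ key]

theorem stmt7 {Ω : Type*} [Fintype Ω] (p : Ω → ℝ)
    (hp : ∀ ω, 0 ≤ p ω) (hp1 : ∑ ω, p ω = 1)
    (W : Ω → ℝ) (M σ η : ℝ) (hM : 0 < M) (hWb : ∀ ω, |W ω| ≤ M)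
    (hE : expect p W = 0) (hVar : variance p W = σ ^ 2)
    (hη : η ∈ Set.Ioo 0 (1 / M)) :
    (∀ ω, 0 ≤ 1 - η * W ω) ∧
    expect p (fun ω => 1 - η * W ω) = 1 ∧
    klDiv (fun ω => p ω * (1 - η * W ω)) p ≤ η ^ 2 * σ ^ 2 / (2 * (1 - η * M)) := by
  obtain ⟨hη0, hη1⟩ := hη
  have hc1 : η * M < 1 := by
    rw [lt_div_iff₀ hM] at hη1; linarith
  have hc0 : 0 < η * M := by positivity
  have habs : ∀ ω, |η * W ω| ≤ η * M := by
    intro ω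
    rw [abs_mul, abs_of_pos hη0]
    exact mul_le_mul_of_nonneg_left (hWb ω) (le_of_lt hη0)
  have hpos : ∀ ω, 0 < 1 - η * W ω := by
    intro ω
    have := (abs_le.mp (habs ω)).2
    linarith
  have hEsum : ∑ ω, p ω * W ω = 0 := hE
  have hE2 : ∑ ω, p ω * W ω ^ 2 = σ ^ 2 := by
    have : variance p W = (∑ ω, p ω * W ω ^ 2) - (∑ ω, p ω * W ω) ^ 2 := rfl
    rw [this, hEsum] at hVar
    linarith [hVar]
  refine ⟨fun ω => le_of_lt (hpos ω), ?_, ?_⟩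
  · unfold expect
    have : ∀ ω, p ω * (1 - η * W ω) = p ω - η * (p ω * W ω) := by intro ω; ring
    simp only [this]
    rw [Finset.sum_sub_distrib, ← Finset.mul_sum, hEsum, hp1]
    ring
  · have hterm : ∀ ω, p ω * (1 - η * W ω) * Real.log (p ω * (1 - η * W ω) / p ω)
        = p ω * ((1 - η * W ω) * Real.log (1 - η * W ω)) := by
      intro ω
      rcases eq_or_lt_of_le (hp ω) with h | h
      · rw [← h]; ring
      · rw [mul_comm (p ω) (1 - η * W ω), mul_div_assoc, div_self (ne_of_gt h), mul_one]
        ring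
    unfold klDiv
    simp only [hterm]
    have hbound : ∀ ω, p ω * ((1 - η * W ω) * Real.log (1 - η * W ω))
        ≤ p ω * (-(η * W ω) + (η * W ω) ^ 2 / (2 * (1 - η * M))) := by
      intro ω
      apply mul_le_mul_of_nonneg_left _ (hp ω)
      have := g_bound (η * M) hc0 hc1 (η * W ω) (habs ω)
      linarith
    calc ∑ ω, p ω * ((1 - η * W ω) * Real.log (1 - η * W ω))
        ≤ ∑ ω, p ω * (-(η * W ω) + (η * W ω) ^ 2 / (2 * (1 - η * M))) :=
          Finset.sum_le_sum (fun ω _ => hbound ω)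
      _ = ∑ ω, ((-η) * (p ω * W ω) + (η ^ 2 / (2 * (1 - η * M))) * (p ω * W ω ^ 2)) := by
          apply Finset.sum_congr rfl
          intro ω _
          field_simp
      _ = η ^ 2 * σ ^ 2 / (2 * (1 - η * M)) := by
          rw [Finset.sum_add_distrib, ← Finset.mul_sum, ← Finset.mul_sum, hEsum, hE2]
          ring
end

section
/- Let W be a random variable on a finite probability space with E[W] = 0, |W| ≤ M, Var(W) = σ², and let δ > 0. Then for every probability measure Q with D_KL(Q‖P) ≤ δ, one has E_Q[−W] ≤ √(2δ)·σ + δ·M. -/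
lemma young (u v : ℝ) (hu : 0 ≤ u) :
    u * v ≤ u * Real.log u - u + Real.exp v := by
  rcases eq_or_lt_of_le hu with h | h
  · simp [← h]; positivity
  · have h1 := Real.add_one_le_exp (v - Real.log u)
    rw [Real.exp_sub, Real.exp_log h] at h1
    rw [le_div_iff₀ h] at h1
    nlinarith

lemma expBound (x b : ℝ) (hxb : |x| ≤ b) (hb : b < 1) :
    Real.exp x ≤ 1 + x + x ^ 2 / (2 * (1 - b)) := by
  have hb0 : 0 ≤ b := le_trans (abs_nonneg x) hxb
  have hx1 : |x| ≤ 1 := hxb.trans hb.le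
  have h := Real.exp_bound hx1 (n := 3) (by norm_num)
  have hsum : ∑ m ∈ Finset.range 3, x ^ m / m.factorial = 1 + x + x ^ 2 / 2 := by
    simp [Finset.sum_range_succ]
  rw [hsum] at h
  have h2 : Real.exp x ≤ 1 + x + x ^ 2 / 2 + |x| ^ 3 * (2 / 9) := by
    have h' := (abs_sub_le_iff.1 h).1
    norm_num [Nat.factorial] at h'
    linarith
  have hx2 : |x| ^ 3 ≤ b * x ^ 2 := by
    have e : |x| ^ 3 = |x| * |x| ^ 2 := by ring
    rw [e, sq_abs]
    nlinarith [sq_nonneg x]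
  have hpos : 0 < 1 - b := by linarith
  have e : x ^ 2 / (2 * (1 - b)) = x ^ 2 / 2 + b * x ^ 2 * (1 / (2 * (1 - b))) := by
    field_simp
    ring
  have h9 : (2 : ℝ) / 9 ≤ 1 / (2 * (1 - b)) := by
    rw [div_le_div_iff₀ (by norm_num) (by positivity)]
    nlinarith
  have h3 : |x| ^ 3 * (2 / 9) ≤ b * x ^ 2 * (1 / (2 * (1 - b))) :=
    mul_le_mul hx2 h9 (by norm_num) (mul_nonneg hb0 (sq_nonneg x))
  rw [e]
  linarith

theorem stmt10 {Ω : Type*} [Fintype Ω] (p : Ω → ℝ)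
    (hp : ∀ ω, 0 ≤ p ω) (hp1 : ∑ ω, p ω = 1)
    (W : Ω → ℝ) (M σ δ : ℝ) (hWb : ∀ ω, |W ω| ≤ M)
    (hE : expect p W = 0) (hσ : 0 ≤ σ) (hVar : variance p W = σ ^ 2) (hδ : 0 < δ)
    (Q : Ω → ℝ) (hQ : ∀ ω, 0 ≤ Q ω) (hQ1 : ∑ ω, Q ω = 1)
    (hac : ∀ ω, p ω = 0 → Q ω = 0) (hKL : klDiv Q p ≤ δ) :
    expect Q (fun ω => -W ω) ≤ Real.sqrt (2 * δ) * σ + δ * M := by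
  -- Ω is nonempty, hence M ≥ 0
  have hne : (Finset.univ : Finset Ω).Nonempty := by
    by_contra h
    rw [Finset.not_nonempty_iff_eq_empty] at h
    rw [h] at hp1
    simp at hp1
  obtain ⟨ω₀, _⟩ := hne
  have hM0 : 0 ≤ M := le_trans (abs_nonneg _) (hWb ω₀)
  have hEW2 : expect p (fun ω => W ω ^ 2) = σ ^ 2 := by
    unfold variance at hVar
    rw [hE] at hVar
    simpa using hVar
  rcases eq_or_lt_of_le hσ with hσ0 | hσpos
  · -- degenerate case σ = 0 : W = 0 on the support of p, hence of Q
    have hsum0 : ∑ ω, p ω * W ω ^ 2 = 0 := by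
      have : expect p (fun ω => W ω ^ 2) = 0 := by rw [hEW2, ← hσ0]; ring
      simpa [expect] using this
    have hW0 : ∀ ω, p ω ≠ 0 → W ω = 0 := by
      intro ω hωp
      have h := (Finset.sum_eq_zero_iff_of_nonneg
        (fun ω _ => mul_nonneg (hp ω) (sq_nonneg (W ω)))).mp hsum0 ω (Finset.mem_univ ω)
      rcases mul_eq_zero.mp h with h' | h'
      · exact absurd h' hωp
      · exact pow_eq_zero_iff (by norm_num) |>.mp h'
    have hEQ : expect Q (fun ω => -W ω) = 0 := by
      unfold expect
      apply Finset.sum_eq_zero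
      intro ω _
      by_cases hpω : p ω = 0
      · rw [hac ω hpω]; ring
      · simp [hW0 ω hpω]
    rw [hEQ, ← hσ0]
    have : (0:ℝ) ≤ δ * M := mul_nonneg hδ.le hM0
    simpa using this
  · -- main case σ > 0 (hence M > 0)
    have hMpos : 0 < M := by
      rcases eq_or_lt_of_le hM0 with h | h
      · exfalso
        have hz : expect p (fun ω => W ω ^ 2) = 0 := by
          unfold expect
          apply Finset.sum_eq_zero
          intro ω _
          have hw := hWb ω
          rw [← h] at hw
          have : W ω = 0 := abs_eq_zero.mp (le_antisymm hw (abs_nonneg _))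
          simp [this]
        nlinarith
      · exact h
    set s := Real.sqrt (2 * δ) with hs_def
    have hspos : 0 < s := Real.sqrt_pos.mpr (by positivity)
    have hs : s ^ 2 = 2 * δ := Real.sq_sqrt (by positivity)
    have hden : 0 < σ + M * s := by positivity
    set L := s / (σ + M * s) with hL_def
    have hLpos : 0 < L := by positivity
    set b := L * M with hb_def
    have hb1 : b < 1 := by
      rw [hb_def, hL_def, div_mul_eq_mul_div, div_lt_one hden]
      nlinarith
    have h1mb : 1 - b = σ / (σ + M * s) := by
      rw [hb_def, hL_def]
      field_simp
      ring
    have hbpos : 0 < 1 - b := by rw [h1mb]; positivity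
    -- Step A: Donsker–Varadhan via Young's inequality
    have stepA : L * expect Q (fun ω => -W ω) ≤
        klDiv Q p - 1 + ∑ ω, p ω * Real.exp (-(L * W ω)) := by
      have hlhs : L * expect Q (fun ω => -W ω) = ∑ ω, Q ω * (-(L * W ω)) := by
        unfold expect
        rw [Finset.mul_sum]
        apply Finset.sum_congr rfl
        intro ω _
        ring
      rw [hlhs]
      have hptwise : ∀ ω ∈ Finset.univ, Q ω * (-(L * W ω)) ≤
          Q ω * Real.log (Q ω / p ω) - Q ω + p ω * Real.exp (-(L * W ω)) := by
        intro ω _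
        by_cases hpω : p ω = 0
        · rw [hac ω hpω, hpω]; simp
        · have hpω' : 0 < p ω := lt_of_le_of_ne (hp ω) (Ne.symm hpω)
          have hy := young (Q ω / p ω) (-(L * W ω)) (div_nonneg (hQ ω) (hp ω))
          have h := mul_le_mul_of_nonneg_left hy hpω'.le
          have e1 : p ω * (Q ω / p ω) = Q ω := by field_simp
          calc Q ω * (-(L * W ω)) = p ω * (Q ω / p ω * (-(L * W ω))) := by
                rw [← mul_assoc, e1]
            _ ≤ p ω * (Q ω / p ω * Real.log (Q ω / p ω) - Q ω / p ω
                + Real.exp (-(L * W ω))) := h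
            _ = Q ω * Real.log (Q ω / p ω) - Q ω + p ω * Real.exp (-(L * W ω)) := by
                rw [mul_add, mul_sub, ← mul_assoc, e1]
      calc ∑ ω, Q ω * (-(L * W ω))
          ≤ ∑ ω, (Q ω * Real.log (Q ω / p ω) - Q ω + p ω * Real.exp (-(L * W ω))) :=
            Finset.sum_le_sum hptwise
        _ = klDiv Q p - 1 + ∑ ω, p ω * Real.exp (-(L * W ω)) := by
            rw [Finset.sum_add_distrib, Finset.sum_sub_distrib, hQ1]
            rfl
    -- Step B: Bernstein MGF bound
    have stepB : ∑ ω, p ω * Real.exp (-(L * W ω)) ≤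
        1 + L ^ 2 / (2 * (1 - b)) * σ ^ 2 := by
      have hpt : ∀ ω ∈ Finset.univ, p ω * Real.exp (-(L * W ω)) ≤
          p ω * (1 + -(L * W ω) + (L * W ω) ^ 2 / (2 * (1 - b))) := by
        intro ω _
        apply mul_le_mul_of_nonneg_left _ (hp ω)
        have habs : |(-(L * W ω))| ≤ b := by
          rw [abs_neg, abs_mul, abs_of_pos hLpos, hb_def]
          exact mul_le_mul_of_nonneg_left (hWb ω) hLpos.le
        have := expBound (-(L * W ω)) b habs hb1
        calc Real.exp (-(L * W ω))
            ≤ 1 + -(L * W ω) + (-(L * W ω)) ^ 2 / (2 * (1 - b)) := this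
          _ = 1 + -(L * W ω) + (L * W ω) ^ 2 / (2 * (1 - b)) := by ring
      calc ∑ ω, p ω * Real.exp (-(L * W ω))
          ≤ ∑ ω, p ω * (1 + -(L * W ω) + (L * W ω) ^ 2 / (2 * (1 - b))) :=
            Finset.sum_le_sum hpt
        _ = ∑ ω, (p ω + (-L) * (p ω * W ω)
              + L ^ 2 / (2 * (1 - b)) * (p ω * W ω ^ 2)) := by
            apply Finset.sum_congr rfl
            intro ω _
            ring
        _ = 1 + L ^ 2 / (2 * (1 - b)) * σ ^ 2 := by
            rw [Finset.sum_add_distrib, Finset.sum_add_distrib, hp1,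
              ← Finset.mul_sum, ← Finset.mul_sum]
            have e1 : ∑ ω, p ω * W ω = 0 := hE
            have e2 : ∑ ω, p ω * W ω ^ 2 = σ ^ 2 := hEW2
            rw [e1, e2]
            ring
    -- combine
    have hcomb : L * expect Q (fun ω => -W ω) ≤ δ + L ^ 2 / (2 * (1 - b)) * σ ^ 2 := by
      have := stepA.trans (by linarith : klDiv Q p - 1 + ∑ ω, p ω * Real.exp (-(L * W ω))
        ≤ δ - 1 + (1 + L ^ 2 / (2 * (1 - b)) * σ ^ 2))
      linarith
    -- final algebra
    have hδs : δ = s ^ 2 / 2 := by linarith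
    have heq : δ + L ^ 2 / (2 * (1 - b)) * σ ^ 2 = L * (s * σ + δ * M) := by
      rw [h1mb, hL_def, hδs]
      field_simp
      ring
    rw [heq] at hcomb
    exact le_of_mul_le_mul_left hcomb hLpos
end

section
/- Let {V_n} be a nonnegative sequence of random variables adapted to a filtration {F_n}, and let {a_n}, {b_n} be nonnegative deterministic sequences with a_n ∈ [0,1], Σ a_n = ∞, and Σ b_n < ∞. If E[V_{n+1} | F_n] ≤ (1 − a_n)V_n + b_n almost surely for all n, then V_n → 0 almost surely. -/
open MeasureTheory Filter

theorem stmt15 {Ω : Type*} [m0 : MeasurableSpace Ω] (μ : Measure Ω) [IsProbabilityMeasure μ]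
    (ℱ : Filtration ℕ m0) (V : ℕ → Ω → ℝ) (a b : ℕ → ℝ)
    (hadapt : Adapted ℱ V) (hint : ∀ n, Integrable (V n) μ)
    (hVnn : ∀ n, 0 ≤ᵐ[μ] V n)
    (ha : ∀ n, a n ∈ Set.Icc (0 : ℝ) 1) (hb : ∀ n, 0 ≤ b n)
    (hasum : ¬ Summable a) (hbsum : Summable b)
    (hrec : ∀ n, μ[V (n + 1) | ℱ n] ≤ᵐ[μ] fun ω => (1 - a n) * V n ω + b n) :
    ∀ᵐ ω ∂μ, Tendsto (fun n => V n ω) atTop (nhds 0) := by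
  classical
  -- tail sums of b
  set t : ℕ → ℝ := fun n => ∑' k, b (k + n) with ht
  have htsummable : ∀ n, Summable fun k => b (k + n) := fun n => (summable_nat_add_iff n).2 hbsum
  have htnn : ∀ n, 0 ≤ t n := fun n => tsum_nonneg fun k => hb _
  have htrec : ∀ n, t n = b n + t (n + 1) := by
    intro n
    have := Summable.tsum_eq_zero_add (htsummable n)
    simp only [zero_add] at this
    rw [ht]
    simp only [this]
    congr 1
    apply tsum_congr
    intro k
    congr 1
    omega
  have ht0 : Tendsto t atTop (nhds 0) := tendsto_sum_nat_add b
  -- the supermartingale X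
  set X : ℕ → Ω → ℝ := fun n ω => V n ω + t n with hX
  have hXint : ∀ n, Integrable (X n) μ := fun n => (hint n).add (integrable_const _)
  have hXadp : Adapted ℱ X := fun n => (hadapt n).add measurable_const
  have hXsm : Supermartingale X ℱ μ := by
    refine supermartingale_nat hXadp.stronglyAdapted hXint fun n => ?_
    have h1 : μ[X (n+1)|ℱ n] =ᵐ[μ] μ[V (n+1)|ℱ n] + fun _ => t (n+1) := by
      have := condExp_add (m := ℱ n) (hint (n+1)) (integrable_const (t (n+1))) (μ := μ)
      refine this.trans ?_
      rw [condExp_const (ℱ.le n)]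
    filter_upwards [h1, hrec n, hVnn n] with ω h1ω h2ω h3ω
    simp only [Pi.zero_apply] at h3ω
    have hle : (1 - a n) * V n ω ≤ V n ω := by
      nlinarith [(ha n).1, (ha n).2]
    calc (μ[X (n+1)|ℱ n]) ω = (μ[V (n+1)|ℱ n]) ω + t (n+1) := h1ω
      _ ≤ (1 - a n) * V n ω + b n + t (n+1) := by linarith
      _ ≤ V n ω + t n := by rw [htrec n]; linarith
  have hXnn : ∀ n, 0 ≤ᵐ[μ] X n := fun n => (hVnn n).mono fun ω h => by
    simp only [Pi.zero_apply] at h ⊢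
    exact add_nonneg h (htnn n)
  -- L¹ boundedness
  have hXmean : ∀ n, ∫ ω, X n ω ∂μ ≤ ∫ ω, X 0 ω ∂μ := by
    intro n
    have h := hXsm.2.1 0 n (Nat.zero_le n)
    have h2 := integral_mono_ae integrable_condExp (hXint 0) h
    rwa [integral_condExp (ℱ.le 0)] at h2
  have hX0nn : 0 ≤ ∫ ω, X 0 ω ∂μ := integral_nonneg_of_ae (hXnn 0)
  have hbdd : ∀ n, eLpNorm (X n) 1 μ ≤ ENNReal.ofReal (∫ ω, X 0 ω ∂μ) := by
    intro n
    rw [eLpNorm_one_eq_lintegral_enorm,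
      ← ofReal_integral_norm_eq_lintegral_enorm (hXint n)]
    apply ENNReal.ofReal_le_ofReal
    refine le_trans ?_ (hXmean n)
    have : ∫ ω, ‖X n ω‖ ∂μ = ∫ ω, X n ω ∂μ := by
      refine integral_congr_ae ((hXnn n).mono fun ω h => ?_)
      simp only [Pi.zero_apply] at h
      exact Real.norm_of_nonneg h
    rw [this]
  -- a.e. convergence of X (hence of V)
  have hconv : ∀ᵐ ω ∂μ, Tendsto (fun n => (-X) n ω) atTop
      (nhds (ℱ.limitProcess (-X) μ ω)) := by
    refine hXsm.neg.ae_tendsto_limitProcess (R := (∫ ω, X 0 ω ∂μ).toNNReal) fun n => ?_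
    have : eLpNorm ((-X) n) 1 μ = eLpNorm (X n) 1 μ := by
      simp [eLpNorm_neg]
    rw [this]
    refine (hbdd n).trans ?_
    rw [ENNReal.ofReal, ENNReal.coe_le_coe]
  -- expectations
  set e : ℕ → ℝ := fun n => ∫ ω, V n ω ∂μ with he
  have henn : ∀ n, 0 ≤ e n := fun n => integral_nonneg_of_ae (hVnn n)
  have herec : ∀ n, e (n + 1) ≤ (1 - a n) * e n + b n := by
    intro n
    have h2 := integral_mono_ae integrable_condExp
      (((hint n).const_mul (1 - a n)).add (integrable_const (b n))) (hrec n)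
    rw [integral_condExp (ℱ.le n)] at h2
    refine h2.trans_eq ?_
    simp only [Pi.add_apply]
    rw [integral_add ((hint n).const_mul _) (integrable_const _), integral_const_mul,
      integral_const]
    simp [he]
  have hkey : ∀ N, ∑ n ∈ Finset.range N, a n * e n + e N ≤ e 0 + ∑ n ∈ Finset.range N, b n := by
    intro N
    induction N with
    | zero => simp
    | succ N ih =>
      rw [Finset.sum_range_succ, Finset.sum_range_succ]
      nlinarith [herec N, ih]
  have hae_sum : Summable fun n => a n * e n := by
    apply summable_of_sum_range_le (c := e 0 + ∑' n, b n)
      (fun n => mul_nonneg (ha n).1 (henn n))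
    intro N
    have h1 := hkey N
    have h2 : ∑ n ∈ Finset.range N, b n ≤ ∑' n, b n :=
      Summable.sum_le_tsum _ (fun i _ => hb i) hbsum
    linarith [henn N]
  have hfreq : ∀ ε : ℝ, 0 < ε → ∃ᶠ n in atTop, e n < ε := by
    intro ε hε
    by_contra h
    rw [not_frequently] at h
    simp only [not_lt] at h
    rw [eventually_atTop] at h
    obtain ⟨N, hN⟩ := h
    apply hasum
    rw [← summable_nat_add_iff N]
    have h1 : Summable fun k => a (k + N) * e (k + N) := (summable_nat_add_iff N).2 hae_sum
    have h2 : Summable fun k => a (k + N) * ε :=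
      Summable.of_nonneg_of_le (fun k => mul_nonneg (ha _).1 hε.le)
        (fun k => mul_le_mul_of_nonneg_left (hN _ (Nat.le_add_left N k)) (ha _).1) h1
    exact (summable_mul_right_iff hε.ne').mp h2
  -- Fatou
  have hVae : ∀ n, AEMeasurable (fun ω => ENNReal.ofReal (V n ω)) μ :=
    fun n => ENNReal.measurable_ofReal.comp_aemeasurable (hint n).aemeasurable
  have hliminf0 : ∀ᵐ ω ∂μ, liminf (fun n => ENNReal.ofReal (V n ω)) atTop = 0 := by
    have hlin : ∫⁻ ω, liminf (fun n => ENNReal.ofReal (V n ω)) atTop ∂μ = 0 := by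
      have h1 := lintegral_liminf_le' (u := atTop) hVae
      have h2 : ∀ n, ∫⁻ ω, ENNReal.ofReal (V n ω) ∂μ = ENNReal.ofReal (e n) :=
        fun n => (ofReal_integral_eq_lintegral_ofReal (hint n) (hVnn n)).symm
      simp_rw [h2] at h1
      have h3 : liminf (fun n => ENNReal.ofReal (e n)) atTop = 0 := by
        refine le_antisymm ?_ zero_le
        refine ENNReal.le_of_forall_pos_le_add fun ε hε _ => ?_
        rw [zero_add]
        refine liminf_le_of_frequently_le' ?_
        refine (hfreq ε (by exact_mod_cast hε)).mono fun n hn => ?_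
        rw [← ENNReal.ofReal_coe_nnreal]
        exact ENNReal.ofReal_le_ofReal hn.le
      rw [h3] at h1
      exact le_antisymm h1 zero_le
    have hm : AEMeasurable (fun ω => liminf (fun n => ENNReal.ofReal (V n ω)) atTop) μ := by
      refine ⟨fun ω => liminf (fun n => (hVae n).mk _ ω) atTop,
        Measurable.liminf fun n => (hVae n).measurable_mk, ?_⟩
      filter_upwards [ae_all_iff.2 fun n => (hVae n).ae_eq_mk] with ω hω
      exact congrArg (fun u => liminf u atTop) (funext hω)
    rw [lintegral_eq_zero_iff' hm] at hlin
    exact hlin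
  -- conclusion
  filter_upwards [hconv, hliminf0, ae_all_iff.2 hVnn] with ω hc hl hnn
  have hXt : Tendsto (fun n => X n ω) atTop (nhds (-(ℱ.limitProcess (-X) μ ω))) := by
    have := hc.neg
    simpa using this
  have hVt : Tendsto (fun n => V n ω) atTop (nhds (-(ℱ.limitProcess (-X) μ ω) - 0)) := by
    have h4 := hXt.sub ht0
    refine h4.congr fun n => ?_
    simp [hX]
  have hcnn : 0 ≤ -(ℱ.limitProcess (-X) μ ω) - 0 := by
    refine ge_of_tendsto hVt (Eventually.of_forall fun n => ?_)
    simpa using hnn n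
  have hofreal : ENNReal.ofReal (-(ℱ.limitProcess (-X) μ ω) - 0) = 0 := by
    have h5 : Tendsto (fun n => ENNReal.ofReal (V n ω)) atTop
        (nhds (ENNReal.ofReal (-(ℱ.limitProcess (-X) μ ω) - 0))) :=
      (ENNReal.continuous_ofReal.continuousAt).tendsto.comp hVt
    rw [← h5.liminf_eq]
    exact hl
  have hzero : -(ℱ.limitProcess (-X) μ ω) - 0 = 0 := by
    rw [ENNReal.ofReal_eq_zero] at hofreal
    linarith
  rw [hzero] at hVt
  exact hVt
end
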